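/- For every n ≥ 1, the n-fold tensor power of the subspace span{I_2, X, Y} ⊆ M_2(ℂ) is unextendible: for all nonzero vectors ψ, φ ∈ (ℂ²)^{⊗n} there exist matrices P_1, …, P_n ∈ {I_2, X, Y} such that tr[(P_1 ⊗ ⋯ ⊗ P_n)† · ψφ†] ≠ 0. Equivalently, no nonzero rank-one matrix in M_{2^n}(ℂ) is Hilbert–Schmidt orthogonal to all n-fold Kronecker products of elements of {I_2, X, Y}. (This is the statement that the quantum channel E with K(E) = span{I_2, X, Y} satisfies α(E^{⊗n}) = 1 for all n, hence C^{(0)}(E) = 0.) -/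

import Mathlib

open Matrix

/-- Pauli `X`. -/
noncomputable def pauliX : Matrix (Fin 2) (Fin 2) ℂ := !![0, 1; 1, 0]

/-- Pauli `Y`. -/
noncomputable def pauliY : Matrix (Fin 2) (Fin 2) ℂ := !![0, -Complex.I; Complex.I, 0]

/-- The `n`-fold Kronecker tensor product of a family of `2 × 2` matrices, as a matrix
on `(ℂ²)^{⊗n} = ℂ^{2^n}`. -/
noncomputable def tensorPow {n : ℕ} (P : Fin n → Matrix (Fin 2) (Fin 2) ℂ) :
    Matrix (Fin n → Fin 2) (Fin n → Fin 2) ℂ :=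
  Matrix.of fun r c => ∏ i, P i (r i) (c i)

noncomputable def myT {n : ℕ} (ψ φ : (Fin n → Fin 2) → ℂ)
    (P : Fin n → Matrix (Fin 2) (Fin 2) ℂ) : ℂ :=
  ∑ k : Fin n → Fin 2, ∑ j : Fin n → Fin 2,
    (starRingEnd ℂ) (∏ i, P i (k i) (j i)) * ψ k * (starRingEnd ℂ) (φ j)

lemma sum_pi_succ {M : Type*} [AddCommMonoid M] {n : ℕ} (g : (Fin (n+1) → Fin 2) → M) :
    ∑ f, g f = ∑ a : Fin 2, ∑ k : Fin n → Fin 2, g (Fin.cons a k) := by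
  have h := Fintype.sum_equiv (Fin.consEquiv fun _ : Fin (n+1) => Fin 2)
    (fun p => g (Fin.cons p.1 p.2)) g (fun p => rfl)
  rw [← h, Fintype.sum_prod_type]

lemma myT_cons {n : ℕ} (ψ φ : (Fin (n+1) → Fin 2) → ℂ) (M : Matrix (Fin 2) (Fin 2) ℂ)
    (Q : Fin n → Matrix (Fin 2) (Fin 2) ℂ) :
    myT ψ φ (Fin.cons M Q) = ∑ a : Fin 2, ∑ b : Fin 2,
      (starRingEnd ℂ) (M a b) *
        myT (fun k => ψ (Fin.cons a k)) (fun j => φ (Fin.cons b j)) Q := by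
  unfold myT
  simp only [sum_pi_succ]
  refine Finset.sum_congr rfl fun a _ => ?_
  rw [Finset.sum_comm]
  refine Finset.sum_congr rfl fun b _ => ?_
  rw [Finset.mul_sum]
  refine Finset.sum_congr rfl fun k _ => ?_
  rw [Finset.mul_sum]
  refine Finset.sum_congr rfl fun j _ => ?_
  rw [Fin.prod_univ_succ]
  simp only [Fin.cons_zero, Fin.cons_succ, _root_.map_mul]
  ring

lemma trace_eq_myT {n : ℕ} (ψ φ : (Fin n → Fin 2) → ℂ) (P : Fin n → Matrix (Fin 2) (Fin 2) ℂ) :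
    ((tensorPow P)ᴴ * vecMulVec ψ (star φ)).trace = myT ψ φ P := by
  unfold myT tensorPow
  simp only [Matrix.trace, Matrix.diag_apply, Matrix.mul_apply, Matrix.conjTranspose_apply,
    Matrix.vecMulVec_apply, Pi.star_apply, Matrix.of_apply, RCLike.star_def]
  rw [Finset.sum_comm]
  refine Finset.sum_congr rfl fun k _ => Finset.sum_congr rfl fun j _ => ?_
  ring

noncomputable def resc {n : ℕ} (ψ : (Fin (n+1) → Fin 2) → ℂ) (a : Fin 2) :
    (Fin n → Fin 2) → ℂ := fun k => ψ (Fin.cons a k)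

lemma myT_zero_left {n : ℕ} (φ : (Fin n → Fin 2) → ℂ) (P : Fin n → Matrix (Fin 2) (Fin 2) ℂ)
    {ψ : (Fin n → Fin 2) → ℂ} (h : ψ = 0) : myT ψ φ P = 0 := by
  simp [myT, h]

lemma myT_zero_right {n : ℕ} (ψ : (Fin n → Fin 2) → ℂ) (P : Fin n → Matrix (Fin 2) (Fin 2) ℂ)
    {φ : (Fin n → Fin 2) → ℂ} (h : φ = 0) : myT ψ φ P = 0 := by
  simp [myT, h]

lemma reconstruct {n : ℕ} (ψ : (Fin (n+1) → Fin 2) → ℂ)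
    (h0 : resc ψ 0 = 0) (h1 : resc ψ 1 = 0) : ψ = 0 := by
  funext f
  have hf := Fin.cons_self_tail f
  have h2 : ∀ a : Fin 2, a = 0 ∨ a = 1 := by decide
  rcases h2 (f 0) with h | h
  · have := congrFun h0 (Fin.tail f)
    simp only [resc, h] at this ⊢
    rw [← hf, h]; exact this
  · have := congrFun h1 (Fin.tail f)
    simp only [resc, h] at this ⊢
    rw [← hf, h]; exact this

lemma key : ∀ n (ψ φ : (Fin n → Fin 2) → ℂ),
    (∀ P : Fin n → Matrix (Fin 2) (Fin 2) ℂ,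
      (∀ i, P i ∈ ({1, pauliX, pauliY} : Set (Matrix (Fin 2) (Fin 2) ℂ))) →
      myT ψ φ P = 0) → ψ = 0 ∨ φ = 0 := by
  intro n
  induction n with
  | zero =>
    intro ψ φ h
    have h0 := h (fun i => 1) (fun i => i.elim0)
    simp only [myT, Fin.prod_univ_zero, _root_.map_one, one_mul, Fintype.sum_unique] at h0
    rcases mul_eq_zero.mp h0 with h' | h'
    · left; funext f
      rw [Pi.zero_apply]
      exact Subsingleton.elim _ f ▸ h'
    · right; funext f
      rw [Pi.zero_apply]
      exact Subsingleton.elim _ f ▸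
        (starRingEnd ℂ).injective ((h'.trans (map_zero (starRingEnd ℂ)).symm))
  | succ n ih =>
    intro ψ φ h
    have memI : (1 : Matrix (Fin 2) (Fin 2) ℂ) ∈ ({1, pauliX, pauliY} : Set _) := by
      simp
    have memX : pauliX ∈ ({1, pauliX, pauliY} : Set (Matrix (Fin 2) (Fin 2) ℂ)) := by
      simp
    have memY : pauliY ∈ ({1, pauliX, pauliY} : Set (Matrix (Fin 2) (Fin 2) ℂ)) := by
      simp
    have hcons : ∀ (M : Matrix (Fin 2) (Fin 2) ℂ),
        M ∈ ({1, pauliX, pauliY} : Set (Matrix (Fin 2) (Fin 2) ℂ)) →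
        ∀ (Q : Fin n → Matrix (Fin 2) (Fin 2) ℂ),
        (∀ i, Q i ∈ ({1, pauliX, pauliY} : Set (Matrix (Fin 2) (Fin 2) ℂ))) →
        ∀ i, (Fin.cons M Q : Fin (n+1) → Matrix (Fin 2) (Fin 2) ℂ) i ∈
          ({1, pauliX, pauliY} : Set (Matrix (Fin 2) (Fin 2) ℂ)) := by
      intro M hM Q hQ i
      induction i using Fin.cases with
      | zero => simpa using hM
      | succ j => simpa using hQ j
    -- the three relations for each good Q
    have hI : ∀ Q, (∀ i, Q i ∈ ({1, pauliX, pauliY} : Set (Matrix (Fin 2) (Fin 2) ℂ))) →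
        myT (resc ψ 0) (resc φ 0) Q + myT (resc ψ 1) (resc φ 1) Q = 0 := by
      intro Q hQ
      have := h (Fin.cons 1 Q) (hcons 1 memI Q hQ)
      rw [myT_cons] at this
      unfold resc
      simpa [Fin.sum_univ_two, Matrix.one_apply, resc] using this
    have hX : ∀ Q, (∀ i, Q i ∈ ({1, pauliX, pauliY} : Set (Matrix (Fin 2) (Fin 2) ℂ))) →
        myT (resc ψ 0) (resc φ 1) Q + myT (resc ψ 1) (resc φ 0) Q = 0 := by
      intro Q hQ
      have := h (Fin.cons pauliX Q) (hcons pauliX memX Q hQ)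
      rw [myT_cons] at this
      unfold resc
      simpa [Fin.sum_univ_two, pauliX, resc] using this
    have hY : ∀ Q, (∀ i, Q i ∈ ({1, pauliX, pauliY} : Set (Matrix (Fin 2) (Fin 2) ℂ))) →
        Complex.I * myT (resc ψ 0) (resc φ 1) Q
          - Complex.I * myT (resc ψ 1) (resc φ 0) Q = 0 := by
      intro Q hQ
      have := h (Fin.cons pauliY Q) (hcons pauliY memY Q hQ)
      rw [myT_cons] at this
      unfold resc
      simpa [Fin.sum_univ_two, pauliY, resc, Complex.conj_I, sub_eq_add_neg] using this
    have h01 : ∀ Q, (∀ i, Q i ∈ ({1, pauliX, pauliY} : Set (Matrix (Fin 2) (Fin 2) ℂ))) →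
        myT (resc ψ 0) (resc φ 1) Q = 0 := by
      intro Q hQ
      have e1 := hX Q hQ
      have e2 := hY Q hQ
      have e3 : myT (resc ψ 0) (resc φ 1) Q - myT (resc ψ 1) (resc φ 0) Q = 0 := by
        have := mul_left_cancel₀ Complex.I_ne_zero
          (show Complex.I * (myT (resc ψ 0) (resc φ 1) Q - myT (resc ψ 1) (resc φ 0) Q)
              = Complex.I * 0 by rw [mul_sub]; rw [mul_zero]; exact e2)
        simpa using this
      linear_combination e1 / 2 + e3 / 2
    have h10 : ∀ Q, (∀ i, Q i ∈ ({1, pauliX, pauliY} : Set (Matrix (Fin 2) (Fin 2) ℂ))) →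
        myT (resc ψ 1) (resc φ 0) Q = 0 := by
      intro Q hQ
      have e1 := hX Q hQ
      have e2 := h01 Q hQ
      linear_combination e1 - e2
    rcases ih (resc ψ 0) (resc φ 1) h01 with hψ0 | hφ1
    · rcases ih (resc ψ 1) (resc φ 0) h10 with hψ1 | hφ0
      · exact Or.inl (reconstruct ψ hψ0 hψ1)
      · -- ψ0 = 0, φ0 = 0
        have hT11 : ∀ Q, (∀ i, Q i ∈ ({1, pauliX, pauliY} : Set (Matrix (Fin 2) (Fin 2) ℂ))) →
            myT (resc ψ 1) (resc φ 1) Q = 0 := by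
          intro Q hQ
          have := hI Q hQ
          have z := myT_zero_left (resc φ 0) Q hψ0
          -- careful: need myT (resc ψ 0) (resc φ 0) Q = 0
          have z' : myT (resc ψ 0) (resc φ 0) Q = 0 := myT_zero_left _ Q hψ0
          linear_combination this - z'
        rcases ih (resc ψ 1) (resc φ 1) hT11 with h' | h'
        · exact Or.inl (reconstruct ψ hψ0 h')
        · exact Or.inr (reconstruct φ hφ0 h')
    · rcases ih (resc ψ 1) (resc φ 0) h10 with hψ1 | hφ0
      · -- φ1 = 0, ψ1 = 0
        have hT00 : ∀ Q, (∀ i, Q i ∈ ({1, pauliX, pauliY} : Set (Matrix (Fin 2) (Fin 2) ℂ))) →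
            myT (resc ψ 0) (resc φ 0) Q = 0 := by
          intro Q hQ
          have := hI Q hQ
          have z' : myT (resc ψ 1) (resc φ 1) Q = 0 := myT_zero_left _ Q hψ1
          linear_combination this - z'
        rcases ih (resc ψ 0) (resc φ 0) hT00 with h' | h'
        · exact Or.inl (reconstruct ψ h' hψ1)
        · exact Or.inr (reconstruct φ h' hφ1)
      · exact Or.inr (reconstruct φ hφ0 hφ1)

/-- for every `n ≥ 1`, the `n`-fold tensor power of `span {I₂, X, Y}` is
unextendible: for all nonzero `ψ, φ ∈ (ℂ²)^{⊗n}` some Kronecker product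
`P_1 ⊗ ⋯ ⊗ P_n` of elements of `{I₂, X, Y}` has nonzero Hilbert–Schmidt inner product
with `ψφ†`. -/
theorem stmt_19 (n : ℕ) (hn : 1 ≤ n) (ψ φ : (Fin n → Fin 2) → ℂ)
    (hψ : ψ ≠ 0) (hφ : φ ≠ 0) :
    ∃ P : Fin n → Matrix (Fin 2) (Fin 2) ℂ,
      (∀ i, P i ∈ ({1, pauliX, pauliY} : Set (Matrix (Fin 2) (Fin 2) ℂ))) ∧
      ((tensorPow P)ᴴ * vecMulVec ψ (star φ)).trace ≠ 0 := by
  by_contra hcon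
  push_neg at hcon
  have h' : ∀ P : Fin n → Matrix (Fin 2) (Fin 2) ℂ,
      (∀ i, P i ∈ ({1, pauliX, pauliY} : Set (Matrix (Fin 2) (Fin 2) ℂ))) → myT ψ φ P = 0 := by
    intro P hP
    rw [← trace_eq_myT]
    exact hcon P hP
  rcases key n ψ φ h' with h1 | h1
  · exact hψ h1
  · exact hφ h1
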